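/- Let 0 < ρ < 1, 0 < θ ≤ π/2, r ≥ 0 and v > 0 be real numbers satisfying (1 − ρ)/v < 2(ρ·sin θ − r). Then there do not exist a 1-Lipschitz map γ : ℝ → ℝ², real times t ≤ s with s − t ≤ (1 − ρ)/v, and radii x₁, x₂ ∈ [ρ, 1], such that dist(γ(t), (x₁·cos θ, x₁·sin θ)) ≤ r and dist(γ(s), (x₂·cos θ, −x₂·sin θ)) ≤ r. -/

import Mathlib

open Real

lemma coord_dist_le (p q : EuclideanSpace ℝ (Fin 2)) (i : Fin 2) :
    |p i - q i| ≤ dist p q := by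
  have := EuclideanSpace.dist_eq p q
  rw [this]
  have h1 : |p i - q i| = Real.sqrt ((p i - q i) ^ 2) := by
    rw [Real.sqrt_sq_eq_abs]
  rw [h1]
  apply Real.sqrt_le_sqrt
  have : (p i - q i) ^ 2 = dist (p i) (q i) ^ 2 := by
    rw [Real.dist_eq, sq_abs]
  rw [this]
  exact Finset.single_le_sum (f := fun j => dist (p j) (q j) ^ 2) (fun j _ => sq_nonneg _) (Finset.mem_univ i)

/-- Geometric core of Theorem 1 (case `θ < π/2`): if `(1 − ρ)/v < 2 (ρ sin θ − r)`,
then no unit-speed (1-Lipschitz) trajectory can come within capture radius `r` of a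
point at radius `x₁ ∈ [ρ, 1]` on the ray at angle `θ` at some time `t` and also come
within `r` of a point at radius `x₂ ∈ [ρ, 1]` on the ray at angle `−θ` at a time
`s ≥ t` with `s − t ≤ (1 − ρ)/v`. -/
theorem stmt_5 (ρ θ r v : ℝ) (hρ0 : 0 < ρ) (hρ1 : ρ < 1) (hθ0 : 0 < θ)
    (hθ : θ ≤ π / 2) (hr : 0 ≤ r) (hv : 0 < v)
    (hcond : (1 - ρ) / v < 2 * (ρ * Real.sin θ - r)) :
    ¬ ∃ (γ : ℝ → EuclideanSpace ℝ (Fin 2)) (t s x₁ x₂ : ℝ),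
        LipschitzWith 1 γ ∧ t ≤ s ∧ s - t ≤ (1 - ρ) / v ∧
        x₁ ∈ Set.Icc ρ 1 ∧ x₂ ∈ Set.Icc ρ 1 ∧
        dist (γ t) (!₂[x₁ * Real.cos θ, x₁ * Real.sin θ]) ≤ r ∧
        dist (γ s) (!₂[x₂ * Real.cos θ, -(x₂ * Real.sin θ)]) ≤ r := by
  rintro ⟨γ, t, s, x₁, x₂, hlip, hts, hsv, ⟨hx₁ρ, hx₁1⟩, ⟨hx₂ρ, hx₂1⟩, h1, h2⟩
  have hsin : 0 < Real.sin θ := Real.sin_pos_of_pos_of_lt_pi hθ0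
    (lt_of_le_of_lt hθ (by linarith [Real.pi_pos]))
  set p : EuclideanSpace ℝ (Fin 2) := !₂[x₁ * Real.cos θ, x₁ * Real.sin θ] with hp
  set q : EuclideanSpace ℝ (Fin 2) := !₂[x₂ * Real.cos θ, -(x₂ * Real.sin θ)] with hq
  have hcoord : |p 1 - q 1| ≤ dist p q := coord_dist_le p q 1
  have hp1 : p 1 = x₁ * Real.sin θ := rfl
  have hq1 : q 1 = -(x₂ * Real.sin θ) := rfl
  have habs : p 1 - q 1 = x₁ * Real.sin θ + x₂ * Real.sin θ := by
    rw [hp1, hq1]; ring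
  have hpos : 2 * ρ * Real.sin θ ≤ |p 1 - q 1| := by
    rw [habs, abs_of_nonneg (by nlinarith : (0:ℝ) ≤ x₁ * Real.sin θ + x₂ * Real.sin θ)]
    nlinarith
  -- triangle inequality
  have htri : dist p q ≤ dist (γ t) p + dist (γ t) (γ s) + dist (γ s) q := by
    calc dist p q ≤ dist p (γ t) + dist (γ t) q := dist_triangle _ _ _
    _ ≤ dist p (γ t) + (dist (γ t) (γ s) + dist (γ s) q) := by
        linarith [dist_triangle (γ t) (γ s) q]
    _ = dist (γ t) p + dist (γ t) (γ s) + dist (γ s) q := by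
        rw [dist_comm p (γ t)]; ring
  have hgl : dist (γ t) (γ s) ≤ s - t := by
    have := hlip.dist_le_mul t s
    rw [Real.dist_eq, abs_of_nonpos (by linarith)] at this
    simp only [NNReal.coe_one, one_mul] at this
    linarith
  have : 2 * ρ * Real.sin θ ≤ r + (s - t) + r := by
    calc 2 * ρ * Real.sin θ ≤ dist p q := hpos.trans hcoord
    _ ≤ dist (γ t) p + dist (γ t) (γ s) + dist (γ s) q := htri
    _ ≤ r + (s - t) + r := by gcongr
  linarith
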